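/- Let (M_n)_{n∈ℕ} be invertible (d+1)×(d+1) real matrices and let v ∈ ℝ^{d+1} with h(v) ≠ 0 be such that h(M_{[0,k)}^{-1} v) ≠ 0 for every k. Then for every k ∈ ℕ, limsup_{n→∞} (1/n)·ln ‖π_v M_{[0,n)}‖₁ = limsup_{n→∞} (1/n)·ln ‖π_{y_k} M_{[k,k+n)}‖₁, where y_k = M_{[0,k)}^{-1} v. In particular, if this limsup is negative, then for every k there exist C > 0 and n₀ such that ‖π_{y_k} M_{[k,k+n)}‖₁ ≤ e^{−nC} for all n ≥ n₀. -/

import Mathlib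

/-- `prodMR M k n = M_k * M_{k+1} * ⋯ * M_{n-1}` (the identity when `n ≤ k`). -/
def prodMR {d : ℕ} (M : ℕ → Matrix (Fin (d + 1)) (Fin (d + 1)) ℝ) (k n : ℕ) :
    Matrix (Fin (d + 1)) (Fin (d + 1)) ℝ :=
  ((List.range' k (n - k)).map M).prod

/-- The projection `π_y : z ↦ z - (h(z)/h(y)) • y` onto `P = {h = 0}`, as a linear map. -/
noncomputable def projL {d : ℕ} (y : Fin (d + 1) → ℝ) :
    (Fin (d + 1) → ℝ) →ₗ[ℝ] (Fin (d + 1) → ℝ) :=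
  LinearMap.id - (∑ i, y i)⁻¹ •
    LinearMap.smulRight (∑ i, LinearMap.proj i : (Fin (d + 1) → ℝ) →ₗ[ℝ] ℝ) y

/-- The operator norm induced by the norm `‖z‖₁ = ∑ i, |z i|`. -/
noncomputable def opNorm1 {d : ℕ} (f : (Fin (d + 1) → ℝ) →ₗ[ℝ] (Fin (d + 1) → ℝ)) : ℝ :=
  sSup {c : ℝ | ∃ z : Fin (d + 1) → ℝ, z ≠ 0 ∧ c = (∑ i, |f z i|) / (∑ i, |z i|)}

namespace LimsupShiftAux

open Filter

variable {d : ℕ}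

/-! ### Basic facts about `opNorm1` -/

lemma sum_abs_pos {z : Fin (d+1) → ℝ} (hz : z ≠ 0) : 0 < ∑ i, |z i| := by
  obtain ⟨i, hi⟩ := Function.ne_iff.mp hz
  exact Finset.sum_pos' (fun j _ => abs_nonneg _) ⟨i, Finset.mem_univ i, abs_pos.mpr hi⟩

lemma sum_abs_apply_le (f : (Fin (d+1) → ℝ) →ₗ[ℝ] (Fin (d+1) → ℝ)) (z : Fin (d+1) → ℝ) :
    (∑ i, |f z i|) ≤ (∑ j, ∑ i, |f (Pi.single j 1) i|) * ∑ i, |z i| := by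
  have hz : z = ∑ j, z j • (Pi.single j 1 : Fin (d+1) → ℝ) := by
    ext i; simp [Finset.sum_apply, Pi.single_apply, Finset.sum_ite_eq']
  calc (∑ i, |f z i|) = ∑ i, |∑ j, z j * f (Pi.single j 1) i| := by
        congr 1; ext i
        conv_lhs => rw [hz]
        simp [map_sum, Finset.sum_apply]
    _ ≤ ∑ i, ∑ j, |z j| * |f (Pi.single j 1) i| := by
        refine Finset.sum_le_sum fun i _ => ?_
        refine (Finset.abs_sum_le_sum_abs _ _).trans ?_
        simp [abs_mul, le_refl]
    _ = ∑ j, |z j| * ∑ i, |f (Pi.single j 1) i| := by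
        rw [Finset.sum_comm]; simp [Finset.mul_sum]
    _ ≤ ∑ j, (∑ k, |z k|) * ∑ i, |f (Pi.single j 1) i| := by
        refine Finset.sum_le_sum fun j _ => ?_
        refine mul_le_mul_of_nonneg_right ?_ (Finset.sum_nonneg fun i _ => abs_nonneg _)
        exact Finset.single_le_sum (f := fun k => |z k|) (fun k _ => abs_nonneg _)
          (Finset.mem_univ j)
    _ = (∑ j, ∑ i, |f (Pi.single j 1) i|) * ∑ i, |z i| := by
        rw [← Finset.mul_sum, mul_comm]

lemma opSet_nonempty (f : (Fin (d+1) → ℝ) →ₗ[ℝ] (Fin (d+1) → ℝ)) :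
    {c : ℝ | ∃ z : Fin (d + 1) → ℝ, z ≠ 0 ∧ c = (∑ i, |f z i|) / (∑ i, |z i|)}.Nonempty := by
  refine ⟨_, Pi.single 0 1, ?_, rfl⟩
  intro h
  have := congrFun h 0
  simp at this

lemma opSet_bdd (f : (Fin (d+1) → ℝ) →ₗ[ℝ] (Fin (d+1) → ℝ)) :
    BddAbove {c : ℝ | ∃ z : Fin (d + 1) → ℝ, z ≠ 0 ∧ c = (∑ i, |f z i|) / (∑ i, |z i|)} := by
  refine ⟨∑ j, ∑ i, |f (Pi.single j 1) i|, fun c hc => ?_⟩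
  obtain ⟨z, hz, rfl⟩ := hc
  rw [div_le_iff₀ (sum_abs_pos hz)]
  exact sum_abs_apply_le f z

lemma ratio_le_opNorm1 (f : (Fin (d+1) → ℝ) →ₗ[ℝ] (Fin (d+1) → ℝ)) {z : Fin (d+1) → ℝ}
    (hz : z ≠ 0) : (∑ i, |f z i|) / (∑ i, |z i|) ≤ opNorm1 f :=
  le_csSup (opSet_bdd f) ⟨z, hz, rfl⟩

lemma opNorm1_nonneg (f : (Fin (d+1) → ℝ) →ₗ[ℝ] (Fin (d+1) → ℝ)) : 0 ≤ opNorm1 f := by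
  have h := ratio_le_opNorm1 (d := d) f (z := Pi.single 0 1) (by
    intro h; have := congrFun h 0; simp at this)
  refine le_trans ?_ h
  positivity

lemma sum_abs_le_opNorm1 (f : (Fin (d+1) → ℝ) →ₗ[ℝ] (Fin (d+1) → ℝ)) (z : Fin (d+1) → ℝ) :
    (∑ i, |f z i|) ≤ opNorm1 f * ∑ i, |z i| := by
  by_cases hz : z = 0
  · simp [hz]
  · rw [← div_le_iff₀ (sum_abs_pos hz)]
    exact ratio_le_opNorm1 f hz

lemma opNorm1_le (f : (Fin (d+1) → ℝ) →ₗ[ℝ] (Fin (d+1) → ℝ)) {b : ℝ}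
    (hb : ∀ z, (∑ i, |f z i|) ≤ b * ∑ i, |z i|) : opNorm1 f ≤ b := by
  refine csSup_le (opSet_nonempty f) fun c hc => ?_
  obtain ⟨z, hz, rfl⟩ := hc
  rw [div_le_iff₀ (sum_abs_pos hz)]
  exact hb z

lemma opNorm1_comp_le (f g : (Fin (d+1) → ℝ) →ₗ[ℝ] (Fin (d+1) → ℝ)) :
    opNorm1 (f ∘ₗ g) ≤ opNorm1 f * opNorm1 g := by
  refine opNorm1_le _ fun z => ?_
  calc (∑ i, |(f ∘ₗ g) z i|) = ∑ i, |f (g z) i| := rfl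
    _ ≤ opNorm1 f * ∑ i, |g z i| := sum_abs_le_opNorm1 f (g z)
    _ ≤ opNorm1 f * (opNorm1 g * ∑ i, |z i|) :=
        mul_le_mul_of_nonneg_left (sum_abs_le_opNorm1 g z) (opNorm1_nonneg f)
    _ = opNorm1 f * opNorm1 g * ∑ i, |z i| := by ring

lemma opNorm1_pos (f : (Fin (d+1) → ℝ) →ₗ[ℝ] (Fin (d+1) → ℝ)) (hf : f ≠ 0) :
    0 < opNorm1 f := by
  obtain ⟨z, hz⟩ : ∃ z, f z ≠ 0 := by
    by_contra h
    push_neg at h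
    exact hf (LinearMap.ext fun z => h z)
  have hz0 : z ≠ 0 := fun h => hz (by simp [h])
  have : 0 < (∑ i, |f z i|) / (∑ i, |z i|) :=
    div_pos (sum_abs_pos hz) (sum_abs_pos hz0)
  exact this.trans_le (ratio_le_opNorm1 f hz0)

/-! ### Facts about `prodMR` and `projL` -/

lemma isUnit_det_listProd (l : List (Matrix (Fin (d+1)) (Fin (d+1)) ℝ))
    (h : ∀ A ∈ l, IsUnit A.det) : IsUnit l.prod.det := by
  induction l with
  | nil => simp
  | cons A t ih =>
      rw [List.prod_cons, Matrix.det_mul]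
      exact (h A (by simp)).mul (ih fun B hB => h B (by simp [hB]))

lemma isUnit_det_prodMR (M : ℕ → Matrix (Fin (d + 1)) (Fin (d + 1)) ℝ)
    (hinv : ∀ n, IsUnit (M n).det) (k n : ℕ) : IsUnit (prodMR M k n).det := by
  refine isUnit_det_listProd _ fun A hA => ?_
  simp only [List.mem_map] at hA
  obtain ⟨m, _, rfl⟩ := hA
  exact hinv m

lemma prodMR_mul (M : ℕ → Matrix (Fin (d + 1)) (Fin (d + 1)) ℝ) (k n : ℕ) :
    prodMR M 0 k * prodMR M k (k + n) = prodMR M 0 (k + n) := by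
  unfold prodMR
  rw [Nat.sub_zero, Nat.sub_zero, Nat.add_sub_cancel_left, ← List.prod_append, ← List.map_append]
  congr 2
  simpa [Nat.add_comm] using List.range'_append_1 (s := 0) (m := k) (n := n)

lemma mulVec_inv_mulVec (A : Matrix (Fin (d+1)) (Fin (d+1)) ℝ) (h : IsUnit A.det)
    (v : Fin (d+1) → ℝ) : A.mulVec (A⁻¹.mulVec v) = v := by
  rw [Matrix.mulVec_mulVec, Matrix.mul_nonsing_inv _ h, Matrix.one_mulVec]

lemma projL_apply (y z : Fin (d+1) → ℝ) :
    projL y z = z - ((∑ i, y i)⁻¹ * ∑ i, z i) • y := by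
  simp [projL, LinearMap.sub_apply, LinearMap.smul_apply, LinearMap.smulRight_apply,
    LinearMap.sum_apply, smul_smul]

lemma projL_self {y : Fin (d+1) → ℝ} (hy : (∑ i, y i) ≠ 0) : projL y y = 0 := by
  rw [projL_apply, inv_mul_cancel₀ hy, one_smul, sub_self]

lemma projL_comp_key (A : Matrix (Fin (d+1)) (Fin (d+1)) ℝ) {y w : Fin (d+1) → ℝ}
    (hAy : A.mulVec y = w) (hw : (∑ i, w i) ≠ 0) (z : Fin (d+1) → ℝ) :
    projL w (A.mulVec (projL y z)) = projL w (A.mulVec z) := by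
  rw [projL_apply y z]
  have : A.mulVec (z - ((∑ i, y i)⁻¹ * ∑ i, z i) • y)
      = A.mulVec z - ((∑ i, y i)⁻¹ * ∑ i, z i) • w := by
    rw [← hAy, ← Matrix.mulVecLin_apply, ← Matrix.mulVecLin_apply, map_sub, map_smul,
      Matrix.mulVecLin_apply, Matrix.mulVecLin_apply]
  rw [this, map_sub, map_smul, projL_self hw, smul_zero, sub_zero]

lemma projL_ne_zero (hd : 1 ≤ d) (y : Fin (d+1) → ℝ) : ∃ z, projL y z ≠ 0 := by
  set z : Fin (d+1) → ℝ := Pi.single 0 1 - Pi.single 1 1 with hzdef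
  have hsum : (∑ i, z i) = 0 := by
    simp [hzdef, Finset.sum_sub_distrib]
  have hz : projL y z = z := by
    rw [projL_apply, hsum, mul_zero, zero_smul, sub_zero]
  refine ⟨z, ?_⟩
  rw [hz]
  intro h
  have h01 : (0 : Fin (d+1)) ≠ 1 := by
    intro hh
    have := congrArg Fin.val hh
    simp [Fin.val_one'] at this
    omega
  have hz0 : z 0 = 1 := by
    simp [hzdef, Pi.single_apply, h01]
  have := congrFun h 0
  rw [hz0] at this
  simp at this

lemma comp_mulVecLin_ne_zero (hd : 1 ≤ d) (y : Fin (d+1) → ℝ)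
    (P : Matrix (Fin (d+1)) (Fin (d+1)) ℝ) (hP : IsUnit P.det) :
    projL y ∘ₗ P.mulVecLin ≠ 0 := by
  obtain ⟨z, hz⟩ := projL_ne_zero hd y
  intro h
  have h2 := congrArg (fun f => f (P⁻¹.mulVec z)) h
  simp only [LinearMap.comp_apply, Matrix.mulVecLin_apply, LinearMap.zero_apply,
    mulVec_inv_mulVec P hP z] at h2
  exact hz h2

/-! ### limsup helpers -/

lemma ereal_le_of_forall {b L : EReal} (h : ∀ c : ℝ, b < c → L ≤ c) : L ≤ b := by
  by_contra hc
  push_neg at hc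
  obtain ⟨c, hc1, hc2⟩ := EReal.exists_between_coe_real hc
  exact absurd (h c hc1) (not_le.mpr hc2)

lemma limsup_le_coe_of_tendsto (x r : ℕ → ℝ) (c : ℝ) (hr : Tendsto r atTop (nhds c))
    (hx : ∀ᶠ n in atTop, x n ≤ r n) :
    Filter.limsup (fun n => ((x n : ℝ) : EReal)) atTop ≤ (c : EReal) := by
  have h2 : Tendsto (fun n => ((r n : ℝ) : EReal)) atTop (nhds (c : EReal)) :=
    EReal.tendsto_coe.mpr hr
  have h1 : Filter.limsup (fun n => ((x n : ℝ) : EReal)) atTop ≤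
      Filter.limsup (fun n => ((r n : ℝ) : EReal)) atTop :=
    Filter.limsup_le_limsup (hx.mono fun n h => EReal.coe_le_coe_iff.mpr h)
  exact h1.trans (le_of_eq h2.limsup_eq)

lemma inv_cast_tendsto : Tendsto (fun n : ℕ => ((n : ℝ))⁻¹) atTop (nhds 0) :=
  tendsto_inv_atTop_zero.comp tendsto_natCast_atTop_atTop

lemma limsup_aux1 (u w : ℕ → ℝ) (k : ℕ) (D : ℝ)
    (h : ∀ n, 1 ≤ n → w n ≤ D + u (k + n)) :
    Filter.limsup (fun n : ℕ => (((n:ℝ)⁻¹ * w n : ℝ) : EReal)) atTop ≤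
    Filter.limsup (fun n : ℕ => (((n:ℝ)⁻¹ * u n : ℝ) : EReal)) atTop := by
  refine ereal_le_of_forall fun c hc => ?_
  obtain ⟨N, hN⟩ := eventually_atTop.mp (Filter.eventually_lt_of_limsup_lt hc)
  refine limsup_le_coe_of_tendsto _ (fun n => (D + k * c) * (n:ℝ)⁻¹ + c) c ?_ ?_
  · simpa using (inv_cast_tendsto.const_mul (D + k * c)).add_const c
  · filter_upwards [eventually_ge_atTop (max N 1)] with n hn
    have hn1 : 1 ≤ n := le_trans (le_max_right N 1) hn
    have hnpos : (0:ℝ) < (n:ℝ) := by exact_mod_cast Nat.lt_of_lt_of_le Nat.zero_lt_one hn1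
    have hu : u (k + n) ≤ ((k:ℝ) + n) * c := by
      have h1 := hN (k + n) (by omega)
      rw [EReal.coe_lt_coe_iff] at h1
      have hpos : (0:ℝ) < ((k + n : ℕ):ℝ) := by positivity
      have h2 : u (k + n) ≤ ((k + n : ℕ):ℝ) * c := by
        have h3 := mul_le_mul_of_nonneg_left h1.le hpos.le
        rwa [← mul_assoc, mul_inv_cancel₀ hpos.ne', one_mul] at h3
      calc u (k + n) ≤ ((k + n : ℕ):ℝ) * c := h2
        _ = ((k:ℝ) + n) * c := by push_cast; ring
    have hw : w n ≤ D + ((k:ℝ) + n) * c := (h n hn1).trans (by linarith)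
    have h4 : (n:ℝ)⁻¹ * w n ≤ (n:ℝ)⁻¹ * (D + ((k:ℝ) + n) * c) :=
      mul_le_mul_of_nonneg_left hw (by positivity)
    refine h4.trans (le_of_eq ?_)
    field_simp
    ring

lemma limsup_aux2 (u w : ℕ → ℝ) (k : ℕ) (D : ℝ)
    (h : ∀ n, 1 ≤ n → u (k + n) ≤ D + w n) :
    Filter.limsup (fun n : ℕ => (((n:ℝ)⁻¹ * u n : ℝ) : EReal)) atTop ≤
    Filter.limsup (fun n : ℕ => (((n:ℝ)⁻¹ * w n : ℝ) : EReal)) atTop := by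
  rw [← Filter.limsup_nat_add (fun n : ℕ => (((n:ℝ)⁻¹ * u n : ℝ) : EReal)) k]
  refine ereal_le_of_forall fun c hc => ?_
  obtain ⟨N, hN⟩ := eventually_atTop.mp (Filter.eventually_lt_of_limsup_lt hc)
  refine limsup_le_coe_of_tendsto _ (fun n => (D - k * c) * (((n + k : ℕ)):ℝ)⁻¹ + c) c ?_ ?_
  · have h0 : Tendsto (fun n : ℕ => (((n + k : ℕ)):ℝ)⁻¹) atTop (nhds 0) :=
      inv_cast_tendsto.comp (tendsto_add_atTop_nat k)
    simpa using (h0.const_mul (D - k * c)).add_const c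
  · filter_upwards [eventually_ge_atTop (max N 1)] with n hn
    have hn1 : 1 ≤ n := le_trans (le_max_right N 1) hn
    have hnpos : (0:ℝ) < (n:ℝ) := by exact_mod_cast Nat.lt_of_lt_of_le Nat.zero_lt_one hn1
    have hkpos : (0:ℝ) < ((n + k : ℕ):ℝ) := by positivity
    have hw : w n ≤ (n:ℝ) * c := by
      have h1 := hN n (le_trans (le_max_left N 1) hn)
      rw [EReal.coe_lt_coe_iff] at h1
      have h3 := mul_le_mul_of_nonneg_left h1.le hnpos.le
      rwa [← mul_assoc, mul_inv_cancel₀ hnpos.ne', one_mul] at h3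
    have hu : u (n + k) ≤ D + (n:ℝ) * c := by
      rw [Nat.add_comm n k]
      exact (h n hn1).trans (by linarith)
    have h4 : ((n + k : ℕ):ℝ)⁻¹ * u (n + k) ≤ ((n + k : ℕ):ℝ)⁻¹ * (D + (n:ℝ) * c) :=
      mul_le_mul_of_nonneg_left hu (by positivity)
    refine h4.trans (le_of_eq ?_)
    have hcast : ((n + k : ℕ):ℝ) = (n:ℝ) + k := by push_cast; ring
    rw [hcast]
    have hne : (n:ℝ) + k ≠ 0 := by positivity
    field_simp
    ring

end LimsupShiftAux

open LimsupShiftAux Filter in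
/-- The exponential convergence rate `limsup (1/n) ln ‖π_v M_{[0,n)}‖₁` is invariant
under shifting the sequence of matrices (with `y_k = M_{[0,k)}⁻¹ v`); in particular, if
it is negative then each shifted sequence decays exponentially. -/
theorem limsup_shift_invariance {d : ℕ} (hd : 1 ≤ d)
    (M : ℕ → Matrix (Fin (d + 1)) (Fin (d + 1)) ℝ)
    (hinv : ∀ n, IsUnit (M n).det)
    (v : Fin (d + 1) → ℝ) (hv : (∑ i, v i) ≠ 0)
    (hy : ∀ k : ℕ, (∑ i, ((prodMR M 0 k)⁻¹.mulVec v) i) ≠ 0) :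
    (∀ k : ℕ,
      Filter.limsup (fun n : ℕ =>
          (((n : ℝ)⁻¹ * Real.log (opNorm1 (projL v ∘ₗ (prodMR M 0 n).mulVecLin)) : ℝ) :
            EReal)) Filter.atTop =
        Filter.limsup (fun n : ℕ =>
          (((n : ℝ)⁻¹ * Real.log (opNorm1 (projL ((prodMR M 0 k)⁻¹.mulVec v) ∘ₗ
              (prodMR M k (k + n)).mulVecLin)) : ℝ) : EReal)) Filter.atTop) ∧
    (Filter.limsup (fun n : ℕ =>
        (((n : ℝ)⁻¹ * Real.log (opNorm1 (projL v ∘ₗ (prodMR M 0 n).mulVecLin)) : ℝ) :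
          EReal)) Filter.atTop < 0 →
      ∀ k : ℕ, ∃ C : ℝ, 0 < C ∧ ∃ n₀ : ℕ, ∀ n ≥ n₀,
        opNorm1 (projL ((prodMR M 0 k)⁻¹.mulVec v) ∘ₗ (prodMR M k (k + n)).mulVecLin) ≤
          Real.exp (-(n * C))) := by
  -- common setup, for each k
  have hMain : ∀ k : ℕ,
      Filter.limsup (fun n : ℕ =>
          (((n : ℝ)⁻¹ * Real.log (opNorm1 (projL v ∘ₗ (prodMR M 0 n).mulVecLin)) : ℝ) :
            EReal)) Filter.atTop =
        Filter.limsup (fun n : ℕ =>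
          (((n : ℝ)⁻¹ * Real.log (opNorm1 (projL ((prodMR M 0 k)⁻¹.mulVec v) ∘ₗ
              (prodMR M k (k + n)).mulVecLin)) : ℝ) : EReal)) Filter.atTop := by
    intro k
    set A := prodMR M 0 k with hA
    set y : Fin (d+1) → ℝ := A⁻¹.mulVec v with hy0
    have hAdet : IsUnit A.det := isUnit_det_prodMR M hinv 0 k
    have hAinvdet : IsUnit A⁻¹.det := A.isUnit_nonsing_inv_det hAdet
    have hAy : A.mulVec y = v := mulVec_inv_mulVec A hAdet v
    set u : ℕ → ℝ := fun n => Real.log (opNorm1 (projL v ∘ₗ (prodMR M 0 n).mulVecLin)) with hu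
    set w : ℕ → ℝ := fun n =>
      Real.log (opNorm1 (projL y ∘ₗ (prodMR M k (k + n)).mulVecLin)) with hw
    -- composition identities
    have hQdet : ∀ n, IsUnit (prodMR M k (k+n)).det := fun n => isUnit_det_prodMR M hinv _ _
    have hPdet : ∀ n, IsUnit (prodMR M 0 n).det := fun n => isUnit_det_prodMR M hinv _ _
    have I1 : ∀ n, projL v ∘ₗ (prodMR M 0 (k+n)).mulVecLin
        = (projL v ∘ₗ A.mulVecLin) ∘ₗ (projL y ∘ₗ (prodMR M k (k+n)).mulVecLin) := by
      intro n
      refine LinearMap.ext fun z => ?_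
      simp only [LinearMap.comp_apply, Matrix.mulVecLin_apply]
      rw [← prodMR_mul M k n, ← Matrix.mulVec_mulVec]
      exact (projL_comp_key A hAy hv _).symm
    have I2 : ∀ n, projL y ∘ₗ (prodMR M k (k+n)).mulVecLin
        = (projL y ∘ₗ (A⁻¹).mulVecLin) ∘ₗ (projL v ∘ₗ (prodMR M 0 (k+n)).mulVecLin) := by
      intro n
      refine LinearMap.ext fun z => ?_
      simp only [LinearMap.comp_apply, Matrix.mulVecLin_apply]
      have hAv : A⁻¹.mulVec v = y := rfl
      rw [projL_comp_key (A⁻¹) hAv (hy k) ((prodMR M 0 (k+n)).mulVec z)]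
      rw [Matrix.mulVec_mulVec, ← prodMR_mul M k n, ← Matrix.mul_assoc,
        Matrix.nonsing_inv_mul A hAdet, Matrix.one_mul]
    -- nonvanishing and positivity
    have hFpos : ∀ n, 0 < opNorm1 (projL v ∘ₗ (prodMR M 0 n).mulVecLin) := fun n =>
      opNorm1_pos _ (comp_mulVecLin_ne_zero hd v _ (hPdet n))
    have hGpos : ∀ n, 0 < opNorm1 (projL y ∘ₗ (prodMR M k (k+n)).mulVecLin) := fun n =>
      opNorm1_pos _ (comp_mulVecLin_ne_zero hd y _ (hQdet n))
    have hCfpos : 0 < opNorm1 (projL v ∘ₗ A.mulVecLin) :=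
      opNorm1_pos _ (comp_mulVecLin_ne_zero hd v _ hAdet)
    have hChpos : 0 < opNorm1 (projL y ∘ₗ (A⁻¹).mulVecLin) :=
      opNorm1_pos _ (comp_mulVecLin_ne_zero hd y _ hAinvdet)
    -- log inequalities
    have h1 : ∀ n, 1 ≤ n → w n ≤ Real.log (opNorm1 (projL y ∘ₗ (A⁻¹).mulVecLin)) + u (k + n) := by
      intro n _
      have hle : opNorm1 (projL y ∘ₗ (prodMR M k (k+n)).mulVecLin)
          ≤ opNorm1 (projL y ∘ₗ (A⁻¹).mulVecLin) *
            opNorm1 (projL v ∘ₗ (prodMR M 0 (k+n)).mulVecLin) := by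
        rw [I2 n]
        exact opNorm1_comp_le _ _
      have := Real.log_le_log (hGpos n) hle
      rwa [Real.log_mul hChpos.ne' (hFpos (k+n)).ne'] at this
    have h2 : ∀ n, 1 ≤ n → u (k + n) ≤ Real.log (opNorm1 (projL v ∘ₗ A.mulVecLin)) + w n := by
      intro n _
      have hle : opNorm1 (projL v ∘ₗ (prodMR M 0 (k+n)).mulVecLin)
          ≤ opNorm1 (projL v ∘ₗ A.mulVecLin) *
            opNorm1 (projL y ∘ₗ (prodMR M k (k+n)).mulVecLin) := by
        rw [I1 n]
        exact opNorm1_comp_le _ _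
      have := Real.log_le_log (hFpos (k+n)) hle
      rwa [Real.log_mul hCfpos.ne' (hGpos n).ne'] at this
    exact le_antisymm (limsup_aux2 u w k _ h2) (limsup_aux1 u w k _ h1)
  refine ⟨hMain, fun hneg k => ?_⟩
  rw [hMain k] at hneg
  obtain ⟨c, hc1, hc2⟩ := EReal.exists_between_coe_real hneg
  have hc2' : c < 0 := by exact_mod_cast hc2
  refine ⟨-c, by linarith, ?_⟩
  obtain ⟨N, hN⟩ := eventually_atTop.mp (Filter.eventually_lt_of_limsup_lt hc1)
  refine ⟨max N 1, fun n hn => ?_⟩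
  have hn1 : 1 ≤ n := le_trans (le_max_right N 1) hn
  have hnpos : (0:ℝ) < (n:ℝ) := by exact_mod_cast Nat.lt_of_lt_of_le Nat.zero_lt_one hn1
  have h1 := hN n (le_trans (le_max_left N 1) hn)
  rw [EReal.coe_lt_coe_iff] at h1
  have hlog : Real.log (opNorm1 (projL ((prodMR M 0 k)⁻¹.mulVec v) ∘ₗ
      (prodMR M k (k + n)).mulVecLin)) ≤ (n:ℝ) * c := by
    have h3 := mul_le_mul_of_nonneg_left h1.le hnpos.le
    rwa [← mul_assoc, mul_inv_cancel₀ hnpos.ne', one_mul] at h3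
  have hpos : 0 < opNorm1 (projL ((prodMR M 0 k)⁻¹.mulVec v) ∘ₗ
      (prodMR M k (k + n)).mulVecLin) :=
    opNorm1_pos _ (comp_mulVecLin_ne_zero hd _ _ (isUnit_det_prodMR M hinv k (k+n)))
  calc opNorm1 (projL ((prodMR M 0 k)⁻¹.mulVec v) ∘ₗ (prodMR M k (k + n)).mulVecLin)
      = Real.exp (Real.log (opNorm1 (projL ((prodMR M 0 k)⁻¹.mulVec v) ∘ₗ
          (prodMR M k (k + n)).mulVecLin))) := (Real.exp_log hpos).symm
    _ ≤ Real.exp (-((n:ℝ) * -c)) := by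
        apply Real.exp_le_exp.mpr
        rw [mul_neg, neg_neg]
        exact hlog
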